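/- Let A be a unital associative algebra over a field k with dim A ≥ 2, and let α, β, γ ∈ k. Define the k-linear map R^A_{α,β,γ} : A ⊗ A → A ⊗ A by a ⊗ b ↦ α ab ⊗ 1 + β 1 ⊗ ab − γ a ⊗ b. Then R^A_{α,β,γ} is a Yang–Baxter operator (i.e. invertible and satisfying the braid equation R¹² ∘ R²³ ∘ R¹² = R²³ ∘ R¹² ∘ R²³) if and only if one of the following holds: (i) α = γ ≠ 0 and β ≠ 0; (ii) β = γ ≠ 0 and α ≠ 0; (iii) α = β = 0 and γ ≠ 0. Moreover, in cases (i) and (ii) the inverse is R^A_{1/β, 1/α, 1/γ}, and in case (iii) the inverse is R^A_{0, 0, 1/γ}. -/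

import Mathlib

open TensorProduct

/-- The twist map `τ : V ⊗ V → V ⊗ V`, `v ⊗ w ↦ w ⊗ v`. -/
noncomputable def twist (k V : Type*) [Field k] [AddCommGroup V] [Module k V] :
    V ⊗[k] V →ₗ[k] V ⊗[k] V := (TensorProduct.comm k V V).toLinearMap

/-- `R¹² = R ⊗ I` acting on `(V ⊗ V) ⊗ V`. -/
noncomputable def r12 {k V : Type*} [Field k] [AddCommGroup V] [Module k V]
    (R : V ⊗[k] V →ₗ[k] V ⊗[k] V) :
    (V ⊗[k] V) ⊗[k] V →ₗ[k] (V ⊗[k] V) ⊗[k] V :=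
  TensorProduct.map R LinearMap.id

/-- `R²³ = I ⊗ R` acting on `(V ⊗ V) ⊗ V`. -/
noncomputable def r23 {k V : Type*} [Field k] [AddCommGroup V] [Module k V]
    (R : V ⊗[k] V →ₗ[k] V ⊗[k] V) :
    (V ⊗[k] V) ⊗[k] V →ₗ[k] (V ⊗[k] V) ⊗[k] V :=
  (TensorProduct.assoc k V V V).symm.toLinearMap ∘ₗ
    TensorProduct.map LinearMap.id R ∘ₗ (TensorProduct.assoc k V V V).toLinearMap

/-- `I ⊗ τ` acting on `(V ⊗ V) ⊗ V`. -/
noncomputable def iTauI (k V : Type*) [Field k] [AddCommGroup V] [Module k V] :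
    (V ⊗[k] V) ⊗[k] V →ₗ[k] (V ⊗[k] V) ⊗[k] V :=
  (TensorProduct.assoc k V V V).symm.toLinearMap ∘ₗ
    TensorProduct.map LinearMap.id (twist k V) ∘ₗ (TensorProduct.assoc k V V V).toLinearMap

/-- `R¹³ = (I ⊗ τ)(R ⊗ I)(I ⊗ τ)` acting on `(V ⊗ V) ⊗ V`. -/
noncomputable def r13 {k V : Type*} [Field k] [AddCommGroup V] [Module k V]
    (R : V ⊗[k] V →ₗ[k] V ⊗[k] V) :
    (V ⊗[k] V) ⊗[k] V →ₗ[k] (V ⊗[k] V) ⊗[k] V :=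
  iTauI k V ∘ₗ r12 R ∘ₗ iTauI k V

/-- The braid equation `R¹² R²³ R¹² = R²³ R¹² R²³`. -/
noncomputable def BraidEq {k V : Type*} [Field k] [AddCommGroup V] [Module k V]
    (R : V ⊗[k] V →ₗ[k] V ⊗[k] V) : Prop :=
  r12 R ∘ₗ r23 R ∘ₗ r12 R = r23 R ∘ₗ r12 R ∘ₗ r23 R

/-- The map `R^A_{α,β,γ} : A ⊗ A → A ⊗ A`, `a ⊗ b ↦ α ab ⊗ 1 + β 1 ⊗ ab - γ a ⊗ b`. -/
noncomputable def RA (k A : Type*) [Field k] [Ring A] [Algebra k A] (α β γ : k) :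
    A ⊗[k] A →ₗ[k] A ⊗[k] A :=
  α • (((TensorProduct.mk k A A).flip 1) ∘ₗ LinearMap.mul' k A) +
    β • ((TensorProduct.mk k A A 1) ∘ₗ LinearMap.mul' k A) -
    γ • LinearMap.id

section Aux

variable {k A : Type*} [Field k] [Ring A] [Algebra k A]

lemma RA_tmul (α β γ : k) (a b : A) :
    RA k A α β γ (a ⊗ₜ[k] b) =
      α • ((a*b) ⊗ₜ[k] (1:A)) + β • ((1:A) ⊗ₜ[k] (a*b)) - γ • (a ⊗ₜ[k] b) := by
  simp [RA, TensorProduct.mk_apply]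

lemma RA_id : RA k A 0 0 (-1) = LinearMap.id := by
  unfold RA
  rw [zero_smul, zero_smul, zero_add, zero_sub]
  refine LinearMap.ext fun x => ?_
  simp

lemma RA_comp (α β γ α' β' γ' : k) :
    RA k A α' β' γ' ∘ₗ RA k A α β γ =
      RA k A (α'*(α+β-γ) - γ'*α) (β'*(α+β-γ) - γ'*β) (-(γ*γ')) := by
  apply TensorProduct.ext'
  intro a b
  simp only [LinearMap.comp_apply, RA_tmul, map_add, map_sub, map_smul, mul_one, one_mul]
  module

lemma braid_left (β γ : k) : BraidEq (RA k A γ β γ) := by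
  unfold BraidEq
  apply TensorProduct.ext_threefold
  intro a b c
  simp only [LinearMap.comp_apply, r12, r23, LinearEquiv.coe_coe, TensorProduct.map_tmul,
    TensorProduct.assoc_tmul, TensorProduct.assoc_symm_tmul, LinearMap.id_coe, id_eq,
    RA_tmul, map_add, map_sub, map_smul, tmul_add, tmul_sub, add_tmul, sub_tmul,
    smul_mul_assoc, mul_smul_comm, smul_tmul, tmul_smul, mul_one, one_mul, mul_assoc]
  module

lemma braid_right (α γ : k) : BraidEq (RA k A α γ γ) := by
  unfold BraidEq
  apply TensorProduct.ext_threefold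
  intro a b c
  simp only [LinearMap.comp_apply, r12, r23, LinearEquiv.coe_coe, TensorProduct.map_tmul,
    TensorProduct.assoc_tmul, TensorProduct.assoc_symm_tmul, LinearMap.id_coe, id_eq,
    RA_tmul, map_add, map_sub, map_smul, tmul_add, tmul_sub, add_tmul, sub_tmul,
    smul_mul_assoc, mul_smul_comm, smul_tmul, tmul_smul, mul_one, one_mul, mul_assoc]
  module

lemma braid_scalar (γ : k) : BraidEq (RA k A 0 0 γ) := by
  unfold BraidEq
  apply TensorProduct.ext_threefold
  intro a b c
  simp only [LinearMap.comp_apply, r12, r23, LinearEquiv.coe_coe, TensorProduct.map_tmul,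
    TensorProduct.assoc_tmul, TensorProduct.assoc_symm_tmul, LinearMap.id_coe, id_eq,
    RA_tmul, map_add, map_sub, map_smul, tmul_add, tmul_sub, add_tmul, sub_tmul,
    smul_mul_assoc, mul_smul_comm, smul_tmul, tmul_smul, mul_one, one_mul, mul_assoc,
    zero_smul, zero_add, zero_sub, map_neg, neg_tmul, tmul_neg]

noncomputable def ev2 (f g : A →ₗ[k] k) : A ⊗[k] A →ₗ[k] k :=
  LinearMap.mul' k k ∘ₗ TensorProduct.map f g

@[simp] lemma ev2_tmul (f g : A →ₗ[k] k) (x y : A) :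
    ev2 f g (x ⊗ₜ[k] y) = f x * g y := by
  simp [ev2]

noncomputable def ev3 (f g h : A →ₗ[k] k) : (A ⊗[k] A) ⊗[k] A →ₗ[k] k :=
  LinearMap.mul' k k ∘ₗ TensorProduct.map (LinearMap.mul' k k ∘ₗ TensorProduct.map f g) h

@[simp] lemma ev3_tmul (f g h : A →ₗ[k] k) (x y z : A) :
    ev3 f g h ((x ⊗ₜ[k] y) ⊗ₜ[k] z) = f x * g y * h z := by
  simp [ev3]

lemma exists_dual (hdim : 2 ≤ Module.rank k A) :
    ∃ (v : A) (f g : A →ₗ[k] k), f 1 = 1 ∧ f v = 0 ∧ g 1 = 0 ∧ g v = 1 := by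
  obtain ⟨v, hv⟩ : ∃ v : A, v ∉ Submodule.span k {(1:A)} := by
    by_contra h
    push_neg at h
    have htop : Submodule.span k ({(1:A)} : Set A) = ⊤ := by
      rw [Submodule.eq_top_iff']; exact h
    have h1 : Module.rank k A ≤ 1 := by
      have := rank_span_le (R := k) ({(1:A)} : Set A)
      rw [htop] at this
      simpa using this
    have := hdim.trans h1
    norm_num at this
  haveI : Nontrivial A := by
    rw [← rank_pos_iff_nontrivial (R := k)]
    exact lt_of_lt_of_le (by norm_num) hdim
  have hone : LinearIndepOn k id ({(1:A)} : Set A) :=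
    (linearIndepOn_singleton_iff k).mpr one_ne_zero
  have hli : LinearIndepOn k id (insert v {(1:A)} : Set A) :=
    hone.id_insert hv
  let b := Module.Basis.extend hli
  have hmem : ({v, (1:A)} : Set A) ⊆ hli.extend (Set.subset_univ _) := hli.subset_extend _
  have hv1 : v ≠ 1 := by
    intro h; exact hv (h ▸ Submodule.subset_span rfl)
  let iv : ↥(hli.extend (Set.subset_univ _)) := ⟨v, hmem (by simp)⟩
  let i1 : ↥(hli.extend (Set.subset_univ _)) := ⟨1, hmem (by simp)⟩
  have hne : iv ≠ i1 := by
    intro h; exact hv1 (congrArg Subtype.val h)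
  have e1 : b i1 = (1:A) := Module.Basis.extend_apply_self hli i1
  have ev : b iv = v := Module.Basis.extend_apply_self hli iv
  refine ⟨v, b.coord i1, b.coord iv, ?_, ?_, ?_, ?_⟩
  · have h : b.coord i1 (b i1) = 1 := by
      rw [Module.Basis.coord_apply, Module.Basis.repr_self, Finsupp.single_eq_same]
    rwa [e1] at h
  · have h : b.coord i1 (b iv) = 0 := by
      rw [Module.Basis.coord_apply, Module.Basis.repr_self, Finsupp.single_eq_of_ne hne.symm]
    rwa [ev] at h
  · have h : b.coord iv (b i1) = 0 := by
      rw [Module.Basis.coord_apply, Module.Basis.repr_self, Finsupp.single_eq_of_ne hne]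
    rwa [e1] at h
  · have h : b.coord iv (b iv) = 1 := by
      rw [Module.Basis.coord_apply, Module.Basis.repr_self, Finsupp.single_eq_same]
    rwa [ev] at h

end Aux

/-- **Theorem (Dăscălescu–Nichita).** For a unital associative `k`-algebra `A` with
`dim A ≥ 2`, the map `R^A_{α,β,γ}` is a Yang–Baxter operator (invertible and satisfying
the braid equation) iff (i) `α = γ ≠ 0, β ≠ 0`, or (ii) `β = γ ≠ 0, α ≠ 0`, or
(iii) `α = β = 0, γ ≠ 0`; in cases (i), (ii) the inverse is `R^A_{1/β, 1/α, 1/γ}`, and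
in case (iii) the inverse is `R^A_{0, 0, 1/γ}`. -/
theorem RA_yang_baxter_iff {k A : Type*} [Field k] [Ring A] [Algebra k A]
    (hdim : 2 ≤ Module.rank k A) (α β γ : k) :
    ((Function.Bijective (RA k A α β γ) ∧ BraidEq (RA k A α β γ)) ↔
      ((α = γ ∧ γ ≠ 0 ∧ β ≠ 0) ∨ (β = γ ∧ γ ≠ 0 ∧ α ≠ 0) ∨
        (α = 0 ∧ β = 0 ∧ γ ≠ 0))) ∧
    (((α = γ ∧ γ ≠ 0 ∧ β ≠ 0) ∨ (β = γ ∧ γ ≠ 0 ∧ α ≠ 0)) →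
      RA k A β⁻¹ α⁻¹ γ⁻¹ ∘ₗ RA k A α β γ = LinearMap.id ∧
        RA k A α β γ ∘ₗ RA k A β⁻¹ α⁻¹ γ⁻¹ = LinearMap.id) ∧
    ((α = 0 ∧ β = 0 ∧ γ ≠ 0) →
      RA k A 0 0 γ⁻¹ ∘ₗ RA k A α β γ = LinearMap.id ∧
        RA k A α β γ ∘ₗ RA k A 0 0 γ⁻¹ = LinearMap.id) := by
  -- inverse statements first
  have inv12 : ((α = γ ∧ γ ≠ 0 ∧ β ≠ 0) ∨ (β = γ ∧ γ ≠ 0 ∧ α ≠ 0)) →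
      RA k A β⁻¹ α⁻¹ γ⁻¹ ∘ₗ RA k A α β γ = LinearMap.id ∧
        RA k A α β γ ∘ₗ RA k A β⁻¹ α⁻¹ γ⁻¹ = LinearMap.id := by
    rintro (⟨rfl, h2, h3⟩ | ⟨rfl, h2, h3⟩)
    · constructor
      · rw [RA_comp,
          show β⁻¹*(α+β-α) - α⁻¹*α = 0 by field_simp; try ring,
          show α⁻¹*(α+β-α) - α⁻¹*β = 0 by ring,
          show -(α*α⁻¹) = -1 by rw [mul_inv_cancel₀ h2]]
        exact RA_id
      · rw [RA_comp,
          show α*(β⁻¹+α⁻¹-α⁻¹) - α*β⁻¹ = 0 by ring,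
          show β*(β⁻¹+α⁻¹-α⁻¹) - α*α⁻¹ = 0 by field_simp; try ring,
          show -(α⁻¹*α) = -1 by rw [inv_mul_cancel₀ h2]]
        exact RA_id
    · constructor
      · rw [RA_comp,
          show β⁻¹*(α+β-β) - β⁻¹*α = 0 by ring,
          show α⁻¹*(α+β-β) - β⁻¹*β = 0 by field_simp; try ring,
          show -(β*β⁻¹) = -1 by rw [mul_inv_cancel₀ h2]]
        exact RA_id
      · rw [RA_comp,
          show α*(β⁻¹+α⁻¹-β⁻¹) - β*β⁻¹ = 0 by field_simp; try ring,
          show β*(β⁻¹+α⁻¹-β⁻¹) - β*α⁻¹ = 0 by ring,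
          show -(β⁻¹*β) = -1 by rw [inv_mul_cancel₀ h2]]
        exact RA_id
  have inv3 : (α = 0 ∧ β = 0 ∧ γ ≠ 0) →
      RA k A 0 0 γ⁻¹ ∘ₗ RA k A α β γ = LinearMap.id ∧
        RA k A α β γ ∘ₗ RA k A 0 0 γ⁻¹ = LinearMap.id := by
    rintro ⟨rfl, rfl, h3⟩
    constructor
    · rw [RA_comp,
        show (0:k)*(0+0-γ) - γ⁻¹*0 = 0 by ring,
        show -(γ*γ⁻¹) = -1 by rw [mul_inv_cancel₀ h3]]
      exact RA_id
    · rw [RA_comp,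
        show (0:k)*(0+0-γ⁻¹) - γ*0 = 0 by ring,
        show -(γ⁻¹*γ) = -1 by rw [inv_mul_cancel₀ h3]]
      exact RA_id
  refine ⟨⟨?_, ?_⟩, inv12, inv3⟩
  · -- forward direction
    rintro ⟨hbij, hbraid⟩
    obtain ⟨v, f, g, hf1, hfv, hg1, hgv⟩ := exists_dual hdim
    have hγ : γ ≠ 0 := by
      intro h0
      have h1 : RA k A α β γ (v ⊗ₜ[k] (1:A)) = RA k A α β γ ((1:A) ⊗ₜ[k] v) := by
        simp [RA_tmul, h0]
      have h2 := hbij.injective h1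
      have h3 := congrArg (ev2 g f) h2
      simp [hf1, hfv, hg1, hgv] at h3
    have hsum : α + β ≠ γ := by
      intro h0
      have h1 : RA k A α β γ ((1:A) ⊗ₜ[k] (1:A)) = RA k A α β γ 0 := by
        rw [map_zero, RA_tmul, mul_one,
          show α • ((1:A) ⊗ₜ[k] (1:A)) + β • ((1:A) ⊗ₜ[k] (1:A)) - γ • ((1:A) ⊗ₜ[k] (1:A))
            = (α + β - γ) • ((1:A) ⊗ₜ[k] (1:A)) from by module, h0, sub_self, zero_smul]
      have h2 := hbij.injective h1
      have h3 := congrArg (ev2 f f) h2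
      simp [hf1] at h3
    have E1 := congrArg (ev3 g f f)
      (LinearMap.congr_fun hbraid ((v ⊗ₜ[k] (1:A)) ⊗ₜ[k] (1:A)))
    have E2 := congrArg (ev3 f f g)
      (LinearMap.congr_fun hbraid (((1:A) ⊗ₜ[k] (1:A)) ⊗ₜ[k] v))
    simp only [LinearMap.comp_apply, r12, r23, LinearEquiv.coe_coe, TensorProduct.map_tmul,
      TensorProduct.assoc_tmul, TensorProduct.assoc_symm_tmul, LinearMap.id_coe, id_eq,
      RA_tmul, map_add, map_sub, map_smul, tmul_add, tmul_sub, add_tmul, sub_tmul,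
      smul_mul_assoc, mul_smul_comm, smul_tmul, tmul_smul, mul_one, one_mul,
      ev3_tmul, hf1, hfv, hg1, hgv, smul_eq_mul, mul_zero, zero_mul] at E1 E2
    have F1 : β*(β-γ)*(γ-α) = 0 := by linear_combination E1
    have F2 : α*(γ-β)*(γ-α) = 0 := by linear_combination E2
    by_cases hαγ : α = γ
    · exact Or.inl ⟨hαγ, hγ, fun hβ => hsum (by rw [hβ, add_zero, hαγ])⟩
    · by_cases hβγ : β = γ
      · exact Or.inr (Or.inl ⟨hβγ, hγ, fun hα => hsum (by rw [hα, zero_add, hβγ])⟩)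
      · have hga : γ - α ≠ 0 := fun h => hαγ (sub_eq_zero.mp h).symm
        have hgb : γ - β ≠ 0 := fun h => hβγ (sub_eq_zero.mp h).symm
        have hbg : β - γ ≠ 0 := sub_ne_zero.mpr hβγ
        refine Or.inr (Or.inr ⟨?_, ?_, hγ⟩)
        · by_contra hα
          exact (mul_ne_zero (mul_ne_zero hα hgb) hga) F2
        · by_contra hβ
          exact (mul_ne_zero (mul_ne_zero hβ hbg) hga) F1
  · -- reverse direction
    rintro h
    have hbij : Function.Bijective (RA k A α β γ) := by
      rcases h with h' | h' | h'
      · obtain ⟨hL, hR⟩ := inv12 (Or.inl h')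
        exact ⟨Function.LeftInverse.injective
            (g := RA k A β⁻¹ α⁻¹ γ⁻¹) (fun x => by simpa using LinearMap.congr_fun hL x),
          Function.RightInverse.surjective
            (g := RA k A β⁻¹ α⁻¹ γ⁻¹) (fun x => by simpa using LinearMap.congr_fun hR x)⟩
      · obtain ⟨hL, hR⟩ := inv12 (Or.inr h')
        exact ⟨Function.LeftInverse.injective
            (g := RA k A β⁻¹ α⁻¹ γ⁻¹) (fun x => by simpa using LinearMap.congr_fun hL x),
          Function.RightInverse.surjective
            (g := RA k A β⁻¹ α⁻¹ γ⁻¹) (fun x => by simpa using LinearMap.congr_fun hR x)⟩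
      · obtain ⟨hL, hR⟩ := inv3 h'
        exact ⟨Function.LeftInverse.injective
            (g := RA k A 0 0 γ⁻¹) (fun x => by simpa using LinearMap.congr_fun hL x),
          Function.RightInverse.surjective
            (g := RA k A 0 0 γ⁻¹) (fun x => by simpa using LinearMap.congr_fun hR x)⟩
    refine ⟨hbij, ?_⟩
    rcases h with ⟨rfl, _, _⟩ | ⟨rfl, _, _⟩ | ⟨rfl, rfl, _⟩
    · exact braid_left β α
    · exact braid_right α β
    · exact braid_scalar γ
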